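/- Let n, p, m be positive integers and ε₁, ε₂ > 0. Let B, g̃₁, …, g̃ₚ, g₁, …, g_m, φ, τ₁, …, τₚ, σ₁, …, σ_m be real multivariate polynomials in n variables, and let f₁, …, fₙ be real multivariate polynomials in n variables. Suppose φ, each τᵢ, and each σⱼ are sums of squares of polynomials, and that the following three polynomials are sums of squares: (i) −B − Σᵢ₌₁ᵖ τᵢ·g̃ᵢ; (ii) B − ε₂ − Σⱼ₌₁ᵐ σⱼ·gⱼ; (iii) −Σₖ₌₁ⁿ (∂B/∂xₖ)·fₖ − φ·(ε₁ − B²) − ε₂·(x₁² + ⋯ + xₙ²). Then B is a barrier certificate for f = (f₁, …, fₙ) with respect to 𝒳₀ = {x ∈ ℝⁿ : g̃₁(x) ≥ 0, …, g̃ₚ(x) ≥ 0} and 𝒳ᵤ = {x ∈ ℝⁿ : g₁(x) ≥ 0, …, g_m(x) ≥ 0}; that is: B(x) ≤ 0 for all x ∈ 𝒳₀; B(x) > 0 for all x ∈ 𝒳ᵤ; and Σₖ₌₁ⁿ (∂B/∂xₖ)(x)·fₖ(x) ≤ 0 for all x ∈ ℝⁿ with |B(x)| ≤ √ε₁. -/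
import Mathlib


open MvPolynomial

/-- A multivariate real polynomial is a sum of squares if it is a finite sum of
squares of polynomials. -/
def IsSOSPoly {n : ℕ} (q : MvPolynomial (Fin n) ℝ) : Prop :=
  ∃ (k : ℕ) (h : Fin k → MvPolynomial (Fin n) ℝ), q = ∑ i : Fin k, (h i) ^ 2

lemma IsSOSPoly.eval_nonneg {n : ℕ} {q : MvPolynomial (Fin n) ℝ} (hq : IsSOSPoly q)
    (x : Fin n → ℝ) : 0 ≤ eval x q := by
  obtain ⟨k, h, rfl⟩ := hq
  simp only [map_sum, map_pow]
  exact Finset.sum_nonneg fun i _ => sq_nonneg _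

/-- The three SOS conditions of Proposition 2 imply that `B` is a barrier certificate
for the polynomial vector field `f` with respect to the basic semialgebraic initial set
`𝒳₀` and unsafe set `𝒳ᵤ`. -/
theorem sos_conditions_give_barrier_certificate
    (n p m : ℕ) (hn : 0 < n) (hp : 0 < p) (hm : 0 < m)
    (ε₁ ε₂ : ℝ) (hε₁ : 0 < ε₁) (hε₂ : 0 < ε₂)
    (B : MvPolynomial (Fin n) ℝ)
    (gt : Fin p → MvPolynomial (Fin n) ℝ)
    (g : Fin m → MvPolynomial (Fin n) ℝ)
    (φ : MvPolynomial (Fin n) ℝ)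
    (τ : Fin p → MvPolynomial (Fin n) ℝ)
    (σ : Fin m → MvPolynomial (Fin n) ℝ)
    (f : Fin n → MvPolynomial (Fin n) ℝ)
    (hφ : IsSOSPoly φ)
    (hτ : ∀ i : Fin p, IsSOSPoly (τ i))
    (hσ : ∀ j : Fin m, IsSOSPoly (σ j))
    (hcond1 : IsSOSPoly (-B - ∑ i : Fin p, τ i * gt i))
    (hcond2 : IsSOSPoly (B - C ε₂ - ∑ j : Fin m, σ j * g j))
    (hcond3 : IsSOSPoly
      (-(∑ k : Fin n, (pderiv k B) * f k) - φ * (C ε₁ - B ^ 2)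
        - C ε₂ * (∑ k : Fin n, (X k) ^ 2))) :
    (∀ x : Fin n → ℝ, (∀ i : Fin p, 0 ≤ eval x (gt i)) → eval x B ≤ 0) ∧
    (∀ x : Fin n → ℝ, (∀ j : Fin m, 0 ≤ eval x (g j)) → 0 < eval x B) ∧
    (∀ x : Fin n → ℝ, |eval x B| ≤ Real.sqrt ε₁ →
      ∑ k : Fin n, eval x (pderiv k B) * eval x (f k) ≤ 0) := by
  refine ⟨fun x hx => ?_, fun x hx => ?_, fun x hx => ?_⟩
  · have h1 := hcond1.eval_nonneg x
    simp only [map_sub, map_neg, map_sum, map_mul] at h1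
    have h2 : 0 ≤ ∑ i : Fin p, eval x (τ i) * eval x (gt i) :=
      Finset.sum_nonneg fun i _ => mul_nonneg ((hτ i).eval_nonneg x) (hx i)
    linarith
  · have h1 := hcond2.eval_nonneg x
    simp only [map_sub, map_sum, map_mul, eval_C] at h1
    have h2 : 0 ≤ ∑ j : Fin m, eval x (σ j) * eval x (g j) :=
      Finset.sum_nonneg fun j _ => mul_nonneg ((hσ j).eval_nonneg x) (hx j)
    linarith
  · have h1 := hcond3.eval_nonneg x
    simp only [map_sub, map_neg, map_sum, map_mul, map_pow, eval_C, eval_X] at h1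
    have hB2 : (eval x B) ^ 2 ≤ ε₁ := by
      have := abs_nonneg (eval x B)
      calc (eval x B) ^ 2 = |eval x B| ^ 2 := (sq_abs _).symm
        _ ≤ Real.sqrt ε₁ ^ 2 := by exact pow_le_pow_left₀ this hx 2
        _ = ε₁ := Real.sq_sqrt hε₁.le
    have h2 : 0 ≤ eval x φ * (ε₁ - eval x B ^ 2) :=
      mul_nonneg (hφ.eval_nonneg x) (by linarith)
    have h3 : 0 ≤ ε₂ * ∑ k : Fin n, x k ^ 2 :=
      mul_nonneg hε₂.le (Finset.sum_nonneg fun k _ => sq_nonneg _)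
    linarith
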